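/- Let F be an uncountable algebraically closed field with prime subfield F₀, let X ⊆ F be a transcendence basis of F over F₀, let X₀ ⊆ X be countably infinite, and let K be the subfield of all elements of F algebraic over F₀(X₀). Then for every finitely presented F-algebra B there exist a field automorphism σ of F, a natural number m, a finite set R of elements of the free algebra F⟨x₁,…,x_m⟩ all of whose coefficients lie in K, and a σ-semilinear isomorphism from B to the quotient of F⟨x₁,…,x_m⟩ by the two-sided ideal generated by R. -/

import Mathlib

/-- Transfer of algebraicity along a commuting square of ring homs. -/
theorem myIsAlgebraic_map {R S A A' : Type*} [CommRing R] [CommRing S]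
    [CommRing A] [CommRing A'] [Algebra R A] [Algebra S A']
    (ψ : R →+* S) (hψ : Function.Injective ψ) (σ : A →+* A')
    (hcomm : ∀ r : R, σ (algebraMap R A r) = algebraMap S A' (ψ r))
    {x : A} (hx : IsAlgebraic R x) : IsAlgebraic S (σ x) := by
  obtain ⟨p, hp0, hp⟩ := hx
  refine ⟨p.map ψ, fun h => hp0 (Polynomial.map_injective ψ hψ (by simpa using h)), ?_⟩
  rw [Polynomial.aeval_def, Polynomial.eval₂_map]
  have : (algebraMap S A').comp ψ = σ.comp (algebraMap R A) := by
    ext r; exact (hcomm r).symm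
  rw [this, ← Polynomial.hom_eval₂]
  rw [Polynomial.aeval_def] at hp
  rw [hp, map_zero]

/-- Quotient ring equivalence induced by an equivalence matching two ring congruences. -/
def myQuotCongr {R S : Type*} [Ring R] [Ring S] (Φ : R ≃+* S)
    (c : RingCon R) (d : RingCon S) (h : ∀ x y, c x y ↔ d (Φ x) (Φ y)) :
    c.Quotient ≃+* d.Quotient where
  toFun := Quotient.map' Φ fun x y hxy => (h x y).1 hxy
  invFun := Quotient.map' Φ.symm fun x y hxy => by
    have := (h (Φ.symm x) (Φ.symm y)).2
    simp only [RingEquiv.apply_symm_apply] at this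
    exact this hxy
  left_inv := by rintro ⟨x⟩; exact congr_arg Quotient.mk'' (Φ.symm_apply_apply x)
  right_inv := by rintro ⟨x⟩; exact congr_arg Quotient.mk'' (Φ.apply_symm_apply x)
  map_mul' := by rintro ⟨x⟩ ⟨y⟩; exact congr_arg Quotient.mk'' (map_mul Φ x y)
  map_add' := by rintro ⟨x⟩ ⟨y⟩; exact congr_arg Quotient.mk'' (map_add Φ x y)

theorem myQuotCongr_mk {R S : Type*} [Ring R] [Ring S] (Φ : R ≃+* S)
    (c : RingCon R) (d : RingCon S) (h : ∀ x y, c x y ↔ d (Φ x) (Φ y)) (x : R) :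
    myQuotCongr Φ c d h (c.mk' x) = d.mk' (Φ x) := rfl

theorem mySpan_le {R : Type*} [Ring R] {s : Set R} {I : TwoSidedIdeal R} (h : s ⊆ I) :
    TwoSidedIdeal.span s ≤ I := fun x hx => TwoSidedIdeal.mem_span_iff.1 hx I h

theorem myMapMemSpan {R S : Type*} [Ring R] [Ring S] (Φ : R ≃+* S) {s : Set R} {x : R}
    (hx : x ∈ TwoSidedIdeal.span s) : Φ x ∈ TwoSidedIdeal.span (Φ '' s) := by
  have : TwoSidedIdeal.span s ≤ TwoSidedIdeal.comap Φ (TwoSidedIdeal.span (Φ '' s)) := by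
    refine mySpan_le fun y hy => ?_
    rw [SetLike.mem_coe, TwoSidedIdeal.mem_comap]
    exact TwoSidedIdeal.subset_span ⟨y, hy, rfl⟩
  exact (TwoSidedIdeal.mem_comap _).1 (this hx)

theorem mySpanImageIff {R S : Type*} [Ring R] [Ring S] (Φ : R ≃+* S) {s : Set R} {x : R} :
    x ∈ TwoSidedIdeal.span s ↔ Φ x ∈ TwoSidedIdeal.span (Φ '' s) := by
  refine ⟨myMapMemSpan Φ, fun h => ?_⟩
  have := myMapMemSpan Φ.symm h
  rw [RingEquiv.symm_apply_apply] at this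
  have hs : Φ.symm '' (Φ '' s) = s := by
    rw [Set.image_image]; simp
  rwa [hs] at this

open MonoidAlgebra

theorem myComm {F : Type} [Field F] {G : Type} [Monoid G] (σ : F →+* F) :
    ∀ (b : F) (a : G),
      Commute ((singleOneRingHom.comp σ : F →+* MonoidAlgebra F G) b) ((of F G) a) := by
  intro b a
  show MonoidAlgebra.single 1 (σ b) * MonoidAlgebra.single a 1
      = MonoidAlgebra.single a 1 * MonoidAlgebra.single 1 (σ b)
  rw [MonoidAlgebra.single_mul_single, MonoidAlgebra.single_mul_single]
  simp

noncomputable def myMapRangeHom {F : Type} [Field F] (G : Type) [Monoid G] (σ : F →+* F) :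
    MonoidAlgebra F G →+* MonoidAlgebra F G :=
  liftNCRingHom (singleOneRingHom.comp σ) (of F G) (myComm σ)

theorem myMapRangeHom_single {F : Type} [Field F] {G : Type} [Monoid G] (σ : F →+* F)
    (a : G) (b : F) :
    myMapRangeHom G σ (MonoidAlgebra.single a b) = MonoidAlgebra.single a (σ b) := by
  show liftNC _ _ (MonoidAlgebra.single a b) = _
  rw [MonoidAlgebra.liftNC_single]
  show MonoidAlgebra.single 1 (σ b) * MonoidAlgebra.single a 1 = _
  rw [MonoidAlgebra.single_mul_single]
  simp

theorem myMapRangeHom_apply {F : Type} [Field F] {G : Type} [Monoid G] (σ : F →+* F)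
    (f : MonoidAlgebra F G) (w : G) : (myMapRangeHom G σ f).coeff w = σ (f.coeff w) := by
  induction f using MonoidAlgebra.induction with
  | zero => simp
  | single_add a b f ha' _ ih =>
      rw [map_add, myMapRangeHom_single]
      rw [MonoidAlgebra.coeff_add, MonoidAlgebra.coeff_add, Finsupp.add_apply, Finsupp.add_apply, ih, map_add]
      congr 1
      classical
      by_cases h : a = w
      · subst h; simp
      · rw [MonoidAlgebra.coeff_single, MonoidAlgebra.coeff_single, Finsupp.single_apply, Finsupp.single_apply, if_neg h, if_neg h, map_zero]

noncomputable def myMapRange {F : Type} [Field F] (G : Type) [Monoid G] (σ : F ≃+* F) :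
    MonoidAlgebra F G ≃+* MonoidAlgebra F G :=
  RingEquiv.ofRingHom (myMapRangeHom G (σ : F →+* F)) (myMapRangeHom G (σ.symm : F →+* F))
    (by
      apply MonoidAlgebra.ringHom_ext <;> intro a <;>
        simp [myMapRangeHom_single])
    (by
      apply MonoidAlgebra.ringHom_ext <;> intro a <;>
        simp [myMapRangeHom_single])

theorem myMapRange_apply {F : Type} [Field F] {G : Type} [Monoid G] (σ : F ≃+* F)
    (f : MonoidAlgebra F G) (w : G) : (myMapRange G σ f).coeff w = σ (f.coeff w) :=
  myMapRangeHom_apply _ f w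

noncomputable def myTwist {F : Type} [Field F] (ι : Type) (σ : F ≃+* F) :
    FreeAlgebra F ι ≃+* FreeAlgebra F ι :=
  (FreeAlgebra.equivMonoidAlgebraFreeMonoid (R := F) (X := ι)).toRingEquiv.trans
    ((myMapRange (FreeMonoid ι) σ).trans
      (FreeAlgebra.equivMonoidAlgebraFreeMonoid (R := F) (X := ι)).symm.toRingEquiv)

theorem myTwist_repr {F : Type} [Field F] {ι : Type} (σ : F ≃+* F)
    (r : FreeAlgebra F ι) (w : FreeMonoid ι) :
    (FreeAlgebra.basisFreeMonoid F ι).repr (myTwist ι σ r) w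
      = σ ((FreeAlgebra.basisFreeMonoid F ι).repr r w) := by
  have hrepr : ∀ (a : FreeAlgebra F ι) (v : FreeMonoid ι),
      (FreeAlgebra.basisFreeMonoid F ι).repr a v
        = (FreeAlgebra.equivMonoidAlgebraFreeMonoid a).coeff v := by
    intro a v
    rw [FreeAlgebra.basisFreeMonoid, Module.Basis.map_repr]
    simp [Finsupp.basisSingleOne]
  rw [hrepr, hrepr]
  show (FreeAlgebra.equivMonoidAlgebraFreeMonoid
      (FreeAlgebra.equivMonoidAlgebraFreeMonoid.symm
        (myMapRange (FreeMonoid ι) σ (FreeAlgebra.equivMonoidAlgebraFreeMonoid r)))).coeff w = _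
  rw [AlgEquiv.apply_symm_apply]
  exact myMapRange_apply σ _ w

theorem myTwist_smul {F : Type} [Field F] {ι : Type} (σ : F ≃+* F)
    (c : F) (a : FreeAlgebra F ι) : myTwist ι σ (c • a) = σ c • myTwist ι σ a := by
  apply (FreeAlgebra.basisFreeMonoid F ι).repr.injective
  ext w
  have h1 : (FreeAlgebra.basisFreeMonoid F ι).repr (myTwist ι σ (c • a)) w
      = σ c * σ ((FreeAlgebra.basisFreeMonoid F ι).repr a w) := by
    rw [myTwist_repr, map_smul, Finsupp.smul_apply, smul_eq_mul, map_mul]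
  have h2 : (FreeAlgebra.basisFreeMonoid F ι).repr (σ c • myTwist ι σ a) w
      = σ c * σ ((FreeAlgebra.basisFreeMonoid F ι).repr a w) := by
    rw [map_smul, Finsupp.smul_apply, smul_eq_mul, myTwist_repr]
  rw [h1, h2]

set_option maxHeartbeats 1000000 in
set_option synthInstance.maxHeartbeats 400000 in
theorem myExistsAut (F : Type) [Field F] [IsAlgClosed F]
    (X : Set F) (hX : IsTranscendenceBasis (⊥ : Subfield F) (Subtype.val : X → F))
    (X₀ : Set F) (hX₀X : X₀ ⊆ X) (hX₀i : X₀.Infinite) (C : Finset F) :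
    ∃ σ : F ≃+* F, ∀ c ∈ C, IsAlgebraic (Subfield.closure X₀) (σ c) := by
  classical
  -- The big intermediate field generated by the transcendence basis
  set V : Set F := Set.range (Subtype.val : X → F) with hV
  have hVX : V = X := Subtype.range_coe
  -- Algebraicity of F over the intermediate field adjoin ⊥ V
  have halgA := hX.isAlgebraic
  have hle : Algebra.adjoin ↥(⊥ : Subfield F) V ≤
      (IntermediateField.adjoin ↥(⊥ : Subfield F) V).toSubalgebra :=
    IntermediateField.algebra_adjoin_le_adjoin _ _
  have halgL : Algebra.IsAlgebraic ↥(IntermediateField.adjoin ↥(⊥ : Subfield F) V) F := by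
    constructor
    intro x
    have hx := Algebra.IsAlgebraic.isAlgebraic (R := ↥(Algebra.adjoin ↥(⊥ : Subfield F) V)) x
    exact myIsAlgebraic_map
      (RingHom.codRestrict ((Algebra.adjoin ↥(⊥ : Subfield F) V).val.toRingHom) _
        (fun a => hle a.2))
      (by intro a b hab
          have h2 := Subtype.ext_iff.1 hab
          exact Subtype.ext h2)
      (RingHom.id F) (fun r => rfl) hx
  -- each element of F is algebraic over a finitely generated piece
  have hfinalg : ∀ c : F, ∃ s : Finset F, ↑s ⊆ V ∧
      IsAlgebraic
        ↥((IntermediateField.adjoin ↥(⊥ : Subfield F) (↑s : Set F)).toSubfield.toSubring) c := by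
    intro c
    obtain ⟨p, hp0, hp⟩ := halgL.isAlgebraic c
    set P : Polynomial F :=
      p.map (algebraMap ↥(IntermediateField.adjoin ↥(⊥ : Subfield F) V) F) with hPdef
    have hPinj : Function.Injective
        (algebraMap ↥(IntermediateField.adjoin ↥(⊥ : Subfield F) V) F) :=
      fun a b hab => Subtype.ext hab
    have hP0 : P ≠ 0 := by
      intro h
      apply hp0
      apply Polynomial.map_injective _ hPinj
      rw [Polynomial.map_zero]
      exact h
    have hmem : ∀ a : ↥(IntermediateField.adjoin ↥(⊥ : Subfield F) V), ∃ t : Finset F,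
        ↑t ⊆ V ∧ (a : F) ∈ IntermediateField.adjoin ↥(⊥ : Subfield F) (↑t : Set F) :=
      fun a => IntermediateField.exists_finset_of_mem_adjoin a.2
    choose t ht1 ht2 using hmem
    set s : Finset F := p.support.biUnion (fun n => t (p.coeff n)) with hs
    have hsV : ↑s ⊆ V := by
      intro a ha
      simp only [hs, Finset.coe_biUnion, Set.mem_iUnion, Finset.mem_coe] at ha
      obtain ⟨n, _, han⟩ := ha
      exact ht1 _ (Finset.mem_coe.2 han)
    have hco : (↑P.coeffs : Set F) ⊆
        ↑((IntermediateField.adjoin ↥(⊥ : Subfield F) (↑s : Set F)).toSubfield.toSubring) := by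
      intro a ha
      rw [Finset.mem_coe, Polynomial.mem_coeffs_iff] at ha
      obtain ⟨n, hn, rfl⟩ := ha
      have hcn : P.coeff n = ↑(p.coeff n) := by simp [hPdef]
      simp only [SetLike.mem_coe, Subfield.mem_toSubring, IntermediateField.mem_toSubfield]
      rw [hcn]
      by_cases hns : n ∈ p.support
      · have hsub : (↑(t (p.coeff n)) : Set F) ⊆ (↑s : Set F) := by
          intro y hy
          exact Finset.mem_coe.2 (Finset.mem_biUnion.2 ⟨n, hns, Finset.mem_coe.1 hy⟩)
        exact IntermediateField.adjoin.mono _ _ _ hsub (ht2 (p.coeff n))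
      · simp only [Polynomial.notMem_support_iff] at hns
        rw [hns]
        simpa using zero_mem (IntermediateField.adjoin ↥(⊥ : Subfield F) (↑s : Set F))
    refine ⟨s, hsV, P.toSubring _ hco, ?_, ?_⟩
    · intro h
      apply hP0
      rw [← Polynomial.map_toSubring P _ hco, h, Polynomial.map_zero]
    · rw [Polynomial.aeval_def, ← Polynomial.eval_map]
      have hqm : (P.toSubring _ hco).map
          (algebraMap
            ↥((IntermediateField.adjoin ↥(⊥ : Subfield F) (↑s : Set F)).toSubfield.toSubring) F)
          = P := Polynomial.map_toSubring P _ hco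
      rw [hqm, hPdef, Polynomial.eval_map, ← Polynomial.aeval_def, hp]
  choose sfun hs1 hs2 using hfinalg
  set S₁ : Finset F := C.biUnion sfun with hS₁
  have hS₁V : ↑S₁ ⊆ V := by
    intro a ha
    simp only [hS₁, Finset.coe_biUnion, Set.mem_iUnion, Finset.mem_coe] at ha
    obtain ⟨cc, _, han⟩ := ha
    exact hs1 _ (Finset.mem_coe.2 han)
  -- build the permutation of X
  set S₁' : Finset X := S₁.preimage (Subtype.val)
    (Set.injOn_of_injective Subtype.val_injective) with hS₁'
  set A' : Finset X := S₁'.filter (fun x => (x : F) ∉ X₀) with hA'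
  have hX₀S : ((Subtype.val : X → F) ⁻¹' (X₀ \ ↑S₁)).Infinite := by
    apply Set.Infinite.preimage (hX₀i.diff (S₁.finite_toSet))
    intro a ha
    have : a ∈ X := hX₀X ha.1
    exact ⟨⟨a, this⟩, rfl⟩
  obtain ⟨D, hD1, hD2⟩ := hX₀S.exists_subset_card_eq A'.card
  have hDX₀ : ∀ y : X, y ∈ D → (y : F) ∈ X₀ ∧ (y : F) ∉ (↑S₁ : Set F) := by
    intro y hy
    exact hD1 hy
  have hAD : ∀ y : X, y ∈ D → y ∉ A' := by
    intro y hyD hyA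
    have h1 := (hDX₀ y hyD).2
    have h2 : y ∈ S₁' := (Finset.mem_filter.1 hyA).1
    rw [hS₁', Finset.mem_preimage] at h2
    exact h1 (Finset.mem_coe.2 h2)
  have hcard : A'.card = D.card := hD2.symm
  set g : ↥A' ≃ ↥D := Finset.equivOfCardEq hcard with hg
  set f : X → X := fun x =>
    if hx : x ∈ A' then ↑(g ⟨x, hx⟩) else if hx' : x ∈ D then ↑(g.symm ⟨x, hx'⟩) else x with hf
  have hfval : ∀ x : X, f x =
      if hx : x ∈ A' then ↑(g ⟨x, hx⟩) else if hx' : x ∈ D then ↑(g.symm ⟨x, hx'⟩) else x :=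
    fun x => rfl
  have hinv : Function.Involutive f := by
    intro x
    by_cases hx : x ∈ A'
    · have hstep : f x = ↑(g ⟨x, hx⟩) := by rw [hfval]; exact dif_pos hx
      have hgD : (↑(g ⟨x, hx⟩) : X) ∈ D := (g ⟨x, hx⟩).2
      have hgA : (↑(g ⟨x, hx⟩) : X) ∉ A' := hAD _ hgD
      rw [hstep, hfval]
      rw [dif_neg hgA, dif_pos hgD]
      have : (⟨↑(g ⟨x, hx⟩), hgD⟩ : ↥D) = g ⟨x, hx⟩ := Subtype.coe_eta _ _
      rw [this, Equiv.symm_apply_apply]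
    · by_cases hx' : x ∈ D
      · have hstep : f x = ↑(g.symm ⟨x, hx'⟩) := by
          rw [hfval]; rw [dif_neg hx]; exact dif_pos hx'
        have hgA : (↑(g.symm ⟨x, hx'⟩) : X) ∈ A' := (g.symm ⟨x, hx'⟩).2
        rw [hstep, hfval, dif_pos hgA]
        have : (⟨↑(g.symm ⟨x, hx'⟩), hgA⟩ : ↥A') = g.symm ⟨x, hx'⟩ := Subtype.coe_eta _ _
        rw [this, Equiv.apply_symm_apply]
      · have hstep : f x = x := by rw [hfval]; rw [dif_neg hx]; exact dif_neg hx'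
        rw [hstep, hfval, dif_neg hx, dif_neg hx']
  set e : Equiv.Perm X := hinv.toPerm f with he'
  have he : ∀ x : X, (x : F) ∈ (↑S₁ : Set F) → ((e x : X) : F) ∈ X₀ := by
    intro x hxS
    have hex : e x = f x := rfl
    by_cases hx : x ∈ A'
    · rw [hex, hfval]; rw [dif_pos hx]
      exact (hDX₀ _ (g ⟨x, hx⟩).2).1
    · have hxD : x ∉ D := by
        intro hxd
        exact (hDX₀ x hxd).2 hxS
      rw [hex, hfval, dif_neg hx, dif_neg hxD]
      have hxS' : x ∈ S₁' := by rw [hS₁', Finset.mem_preimage]; exact Finset.mem_coe.1 hxS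
      by_contra hxX₀
      exact hx (Finset.mem_filter.2 ⟨hxS', hxX₀⟩)
  -- lift the permutation to an automorphism of F
  haveI : Module.IsTorsionFree ↥(IntermediateField.adjoin ↥(⊥ : Subfield F) V) F :=
    Module.isTorsionFree_iff_algebraMap_injective.2 (fun a b hab => Subtype.ext hab)
  haveI : IsAlgClosure ↥(IntermediateField.adjoin ↥(⊥ : Subfield F) V) F :=
    ⟨inferInstance, halgL⟩
  obtain ⟨aEF, haEF⟩ : ∃ a, a = hX.1.aevalEquivField := ⟨_, rfl⟩
  obtain ⟨ρ, hρ⟩ : ∃ ρ : FractionRing (MvPolynomial X ↥(⊥ : Subfield F)) ≃+*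
      FractionRing (MvPolynomial X ↥(⊥ : Subfield F)),
      ρ = IsFractionRing.ringEquivOfRingEquiv
        (MvPolynomial.renameEquiv ↥(⊥ : Subfield F) e).toRingEquiv := ⟨_, rfl⟩
  obtain ⟨σ₀, hσ₀⟩ : ∃ σ₀, σ₀ = (aEF.symm.toRingEquiv.trans (ρ.trans aEF.toRingEquiv)) :=
    ⟨_, rfl⟩
  obtain ⟨σ, hσ⟩ : ∃ σ : F ≃+* F, σ = IsAlgClosure.equivOfEquiv F F σ₀ := ⟨_, rfl⟩
  have hkey : ∀ z : ↥(IntermediateField.adjoin ↥(⊥ : Subfield F)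
      (Set.range (Subtype.val : X → F))), σ (↑z : F) = ↑(σ₀ z) := by
    intro z
    have h0 := IsAlgClosure.equivOfEquiv_algebraMap F F σ₀ z
    rw [hσ]
    simpa using h0
  have hgen : ∀ i : X, σ ↑i = ↑(e i) := by
    intro i
    have hz : (aEF (algebraMap (MvPolynomial X ↥(⊥ : Subfield F)) _ (MvPolynomial.X i)) :
        F) = ↑i := by
      rw [haEF, AlgebraicIndependent.aevalEquivField_algebraMap_apply_coe]
      simp
    have hz2 : σ₀ (aEF (algebraMap (MvPolynomial X ↥(⊥ : Subfield F)) _ (MvPolynomial.X i)))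
        = aEF (algebraMap (MvPolynomial X ↥(⊥ : Subfield F)) _ (MvPolynomial.X (e i))) := by
      have e1 : ∀ z', σ₀ z' = aEF.toRingEquiv (ρ (aEF.symm.toRingEquiv z')) := by
        intro z'
        rw [hσ₀]
        rfl
      rw [e1]
      have h1 : aEF.symm.toRingEquiv
          (aEF (algebraMap (MvPolynomial X ↥(⊥ : Subfield F)) _ (MvPolynomial.X i)))
          = algebraMap (MvPolynomial X ↥(⊥ : Subfield F)) _ (MvPolynomial.X i) :=
        aEF.symm_apply_apply _
      rw [h1, hρ, IsFractionRing.ringEquivOfRingEquiv_algebraMap]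
      show aEF _ = aEF _
      congr 1
      simp
    rw [← hz, hkey, hz2]
    rw [haEF, AlgebraicIndependent.aevalEquivField_algebraMap_apply_coe]
    simp
  refine ⟨σ, ?_⟩
  intro c hc
  -- σ maps adjoin ⊥ (sfun c) into closure X₀
  have hmemc : ∀ a : ↥((IntermediateField.adjoin ↥(⊥ : Subfield F)
      (↑(sfun c) : Set F)).toSubfield.toSubring), σ ↑a ∈ Subfield.closure X₀ := by
    intro a
    have ha : (a : F) ∈ IntermediateField.adjoin ↥(⊥ : Subfield F) (↑(sfun c) : Set F) := a.2
    have hDif : IntermediateField.adjoin ↥(⊥ : Subfield F) (↑(sfun c) : Set F) ≤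
        ((Subfield.closure X₀).comap σ.toRingHom).toIntermediateField
          (fun x => (SetLike.le_def.mp bot_le) x.2) := by
      rw [IntermediateField.adjoin_le_iff]
      intro y hy
      have hyS : y ∈ (↑S₁ : Set F) := by
        rw [hS₁]
        exact Finset.mem_coe.2 (Finset.mem_biUnion.2 ⟨c, hc, Finset.mem_coe.1 hy⟩)
      have hyV : y ∈ V := hs1 c hy
      obtain ⟨i, rfl⟩ := hyV
      show σ ↑i ∈ Subfield.closure X₀
      rw [hgen i]
      exact Subfield.subset_closure (he i hyS)
    exact hDif ha
  exact myIsAlgebraic_map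
    (RingHom.codRestrict (σ.toRingHom.comp (Subring.subtype _)) _ hmemc)
    (by intro a b hab
        have h2 := Subtype.ext_iff.1 hab
        have h3 := σ.injective h2
        exact Subtype.ext h3)
    σ.toRingHom (fun r => rfl) (hs2 c)


/-- The quotient of the free algebra `F⟨x₁,…,x_m⟩` by the two-sided ideal generated by `R`. -/
abbrev FreePresQuot (F : Type) [Field F] (m : ℕ) (R : Set (FreeAlgebra F (Fin m))) : Type :=
  (TwoSidedIdeal.span R).ringCon.Quotient

/-- An `F`-algebra is finitely presented if it is isomorphic to a quotient of a free
associative algebra on finitely many generators by the two-sided ideal generated by a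
finite set of relations. -/
def IsFinitelyPresentedAlgebra (F : Type) [Field F] (A : Type) [Ring A] [Algebra F A] : Prop :=
  ∃ (m : ℕ) (R : Finset (FreeAlgebra F (Fin m))),
    Nonempty (A ≃ₐ[F] FreePresQuot F m (R : Set (FreeAlgebra F (Fin m))))

/-- A `σ`-semilinear isomorphism between `F`-algebras `A` and `B`: a ring isomorphism
`φ : A → B` with `φ (c • a) = σ c • φ a` for all `c : F`, `a : A`. -/
def IsSemilinearIso (F : Type) [Field F] (σ : F ≃+* F)
    (A B : Type) [Ring A] [Ring B] [Algebra F A] [Algebra F B] : Prop :=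
  ∃ φ : A ≃+* B, ∀ (c : F) (a : A), φ (c • a) = σ c • φ a

/-- Let `F` be an uncountable algebraically closed field, `X` a transcendence basis of `F`
over its prime subfield `F₀ = ⊥`, `X₀ ⊆ X` countably infinite, and `K` the algebraic closure
of `F₀(X₀)` inside `F` (the elements algebraic over the subfield generated by `X₀`).  Then
every finitely presented `F`-algebra `B` admits a field automorphism `σ` of `F` and a
`σ`-semilinear isomorphism onto a finitely presented `F`-algebra whose defining relations
have all their coefficients (with respect to the monomial basis of the free algebra) in `K`. -/
theorem exists_semilinearIso_to_presentation_over_countable_subfield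
    (F : Type) [Field F] [IsAlgClosed F] (hF : ¬ Countable F)
    (X : Set F) (hX : IsTranscendenceBasis (⊥ : Subfield F) (Subtype.val : X → F))
    (X₀ : Set F) (hX₀X : X₀ ⊆ X) (hX₀c : X₀.Countable) (hX₀i : X₀.Infinite)
    (B : Type) [Ring B] [Algebra F B] (hB : IsFinitelyPresentedAlgebra F B) :
    ∃ (σ : F ≃+* F) (m : ℕ) (R : Finset (FreeAlgebra F (Fin m))),
      (∀ r ∈ R, ∀ w : FreeMonoid (Fin m),
        IsAlgebraic (Subfield.closure X₀) ((FreeAlgebra.basisFreeMonoid F (Fin m)).repr r w)) ∧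
      IsSemilinearIso F σ B (FreePresQuot F m (R : Set (FreeAlgebra F (Fin m)))) := by
  classical
  obtain ⟨m, R₀, ⟨ψ⟩⟩ := hB
  set C : Finset F := R₀.biUnion (fun r =>
    ((FreeAlgebra.basisFreeMonoid F (Fin m)).repr r).support.image
      (fun w => (FreeAlgebra.basisFreeMonoid F (Fin m)).repr r w)) with hC
  obtain ⟨σ, hσC⟩ := myExistsAut F X hX X₀ hX₀X hX₀i C
  set Φ := myTwist (Fin m) σ with hΦ
  refine ⟨σ, m, R₀.image Φ, ?_, ?_⟩
  · intro r hr w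
    obtain ⟨r₀, hr₀, rfl⟩ := Finset.mem_image.1 hr
    rw [hΦ, myTwist_repr]
    by_cases h0 : (FreeAlgebra.basisFreeMonoid F (Fin m)).repr r₀ w = 0
    · rw [h0, map_zero]
      exact isAlgebraic_zero
    · apply hσC
      rw [hC]
      exact Finset.mem_biUnion.2 ⟨r₀, hr₀,
        Finset.mem_image.2 ⟨w, Finsupp.mem_support_iff.2 h0, rfl⟩⟩
  · have himg : ((R₀.image Φ : Finset (FreeAlgebra F (Fin m))) : Set (FreeAlgebra F (Fin m)))
        = Φ '' (R₀ : Set (FreeAlgebra F (Fin m))) := Finset.coe_image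
    have hcon : ∀ x y, (TwoSidedIdeal.span (R₀ : Set (FreeAlgebra F (Fin m)))).ringCon x y ↔
        (TwoSidedIdeal.span ((R₀.image Φ : Finset (FreeAlgebra F (Fin m))) :
          Set (FreeAlgebra F (Fin m)))).ringCon (Φ x) (Φ y) := by
      intro x y
      rw [TwoSidedIdeal.rel_iff, TwoSidedIdeal.rel_iff, himg, ← map_sub]
      exact mySpanImageIff Φ
    refine ⟨(ψ.toRingEquiv).trans (myQuotCongr Φ _ _ hcon), ?_⟩
    intro c a
    rw [Algebra.smul_def, Algebra.smul_def, map_mul]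
    congr 1
    show myQuotCongr Φ _ _ hcon (ψ.toRingEquiv (algebraMap F B c)) = _
    have h2 : ψ.toRingEquiv (algebraMap F B c)
        = algebraMap F (FreePresQuot F m (R₀ : Set (FreeAlgebra F (Fin m)))) c := ψ.commutes c
    rw [h2]
    have h3 : (algebraMap F (FreePresQuot F m (R₀ : Set (FreeAlgebra F (Fin m)))) c)
        = (TwoSidedIdeal.span (R₀ : Set (FreeAlgebra F (Fin m)))).ringCon.mk'
            (algebraMap F (FreeAlgebra F (Fin m)) c) := rfl
    rw [h3, myQuotCongr_mk]
    have h4 : Φ (algebraMap F (FreeAlgebra F (Fin m)) c)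
        = algebraMap F (FreeAlgebra F (Fin m)) (σ c) := by
      rw [Algebra.algebraMap_eq_smul_one, Algebra.algebraMap_eq_smul_one, hΦ, myTwist_smul,
        map_one]
    rw [h4]
    rfl
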